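/- arXiv:2601.18942 — 2 statements merged into one kernel-verified Lean document; each statement's English description precedes it below -/
import Mathlib

section
/- Fix a ∈ (0,1] and s ∈ (0,1]. The stationary Gate-Opened probability π_3(p,a,s) = p·s / ((1−p)·(1 + p/a + p) + p·s) is strictly increasing in p on the interval (0,1): if 0 < p₁ < p₂ < 1 then π_3(p₁,a,s) < π_3(p₂,a,s). -/
/-- Stationary Gate-Opened probability of the pathfinder Markov chain. -/
noncomputable def pi3 (p a s : ℝ) : ℝ :=
  p * s / ((1 - p) * (1 + p / a + p) + p * s)

theorem stmt_3 (a s : ℝ) (ha : a ∈ Set.Ioc (0:ℝ) 1) (hs : s ∈ Set.Ioc (0:ℝ) 1)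
    (p₁ p₂ : ℝ) (h1 : 0 < p₁) (h12 : p₁ < p₂) (h2 : p₂ < 1) :
    pi3 p₁ a s < pi3 p₂ a s := by
  obtain ⟨ha0, ha1⟩ := ha
  obtain ⟨hs0, hs1⟩ := hs
  have hp1 : p₁ < 1 := h12.trans h2
  have hp2 : 0 < p₂ := h1.trans h12
  have hd1 : 0 < (1 - p₁) * (1 + p₁ / a + p₁) + p₁ * s := by
    have := div_nonneg h1.le ha0.le
    nlinarith
  have hd2 : 0 < (1 - p₂) * (1 + p₂ / a + p₂) + p₂ * s := by
    have := div_nonneg hp2.le ha0.le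
    nlinarith
  unfold pi3
  rw [div_lt_div_iff₀ hd1 hd2]
  have key : p₁ * ((1 - p₂) * (1 + p₂ / a + p₂)) < p₂ * ((1 - p₁) * (1 + p₁ / a + p₁)) := by
    rw [div_eq_mul_inv, div_eq_mul_inv]
    have hia : 0 < a⁻¹ := inv_pos.mpr ha0
    nlinarith [mul_pos h1 hp2, mul_pos (mul_pos h1 hp2) hia, mul_pos (sub_pos.mpr h12) hia]
  nlinarith [key]
end

section
/- Let β > 0, U⁻ < 0 < U⁺, n ≥ 1 a natural number, ε > 0, and δ ∈ (0,1). Suppose α*, α** ∈ [0,1] satisfy W(α*) = δ and W_sys(α**) = δ. Then α** > α*: selfless behavior strictly raises the tipping point, so the system tolerates a strictly larger proportion of rejective flights at the same failure tolerance δ. -/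
/-- Worst-case collective rejection probability with representative utilities
shifted by `t` (baseline corresponds to `t = 0`, selfless case to `t = ε > 0`). -/
noncomputable def Wshift (β Um Up : ℝ) (n : ℕ) (t α : ℝ) : ℝ :=
  (α * (1 / (1 + Real.exp (β * (Um + t)))) +
    (1 - α) * (1 / (1 + Real.exp (β * (Up + t))))) ^ n

theorem stmt_15 (β Um Up : ℝ) (hβ : 0 < β) (hUm : Um < 0) (hUp : 0 < Up)
    (n : ℕ) (hn : 1 ≤ n) (ε : ℝ) (hε : 0 < ε) (δ : ℝ) (hδ : δ ∈ Set.Ioo (0:ℝ) 1)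
    (αstar αstarstar : ℝ)
    (hαstar : αstar ∈ Set.Icc (0:ℝ) 1) (hαss : αstarstar ∈ Set.Icc (0:ℝ) 1)
    (hbase : Wshift β Um Up n 0 αstar = δ)
    (hsys : Wshift β Um Up n ε αstarstar = δ) :
    αstar < αstarstar := by
  obtain ⟨hα1, hα2⟩ := hαstar
  obtain ⟨hb1, hb2⟩ := hαss
  set p : ℝ → ℝ → ℝ := fun u t => 1 / (1 + Real.exp (β * (u + t))) with hp
  have hpos : ∀ u t : ℝ, 0 < p u t := by
    intro u t; simp only [hp]; positivity
  have hlt : ∀ u v t : ℝ, u < v → p v t < p u t := by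
    intro u v t huv
    have h1 : 0 < 1 + Real.exp (β * (u + t)) := by positivity
    have h2 : Real.exp (β * (u + t)) < Real.exp (β * (v + t)) :=
      Real.exp_lt_exp.mpr (mul_lt_mul_of_pos_left (by linarith) hβ)
    exact one_div_lt_one_div_of_lt h1 (by linarith)
  have htlt : ∀ u : ℝ, p u ε < p u 0 := by
    intro u
    have h1 : 0 < 1 + Real.exp (β * (u + 0)) := by positivity
    have h2 : Real.exp (β * (u + 0)) < Real.exp (β * (u + ε)) :=
      Real.exp_lt_exp.mpr (mul_lt_mul_of_pos_left (by linarith) hβ)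
    exact one_div_lt_one_div_of_lt h1 (by linarith)
  -- inner affine functions
  have hAB0 : p Up 0 < p Um 0 := hlt Um Up 0 (by linarith)
  have hABe : p Up ε < p Um ε := hlt Um Up ε (by linarith)
  set f0 : ℝ := αstar * p Um 0 + (1 - αstar) * p Up 0 with hf0
  set fe : ℝ := αstarstar * p Um ε + (1 - αstarstar) * p Up ε with hfe
  have hf0pos : 0 < f0 := by
    have := hpos Up 0
    have := hpos Um 0
    nlinarith [mul_nonneg hα1 (sub_pos.mpr hAB0).le]
  have hfepos : 0 < fe := by
    have := hpos Up ε
    have := hpos Um ε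
    nlinarith [mul_nonneg hb1 (sub_pos.mpr hABe).le]
  have heqn : f0 ^ n = fe ^ n := by
    have h1 : f0 ^ n = δ := hbase
    have h2 : fe ^ n = δ := hsys
    rw [h1, h2]
  have heq : f0 = fe := by
    have hn0 : n ≠ 0 := by omega
    exact (pow_left_inj₀ hf0pos.le hfepos.le hn0).mp heqn
  -- fe < f0 evaluated at αstarstar
  have hstep : fe < αstarstar * p Um 0 + (1 - αstarstar) * p Up 0 := by
    have hA := htlt Um
    have hB := htlt Up
    rcases eq_or_lt_of_le hb1 with h0 | h0
    · simp only [hfe, ← h0]; linarith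
    · have h1 : αstarstar * p Um ε < αstarstar * p Um 0 :=
        mul_lt_mul_of_pos_left hA h0
      have h2 : (1 - αstarstar) * p Up ε ≤ (1 - αstarstar) * p Up 0 :=
        mul_le_mul_of_nonneg_left hB.le (by linarith)
      simp only [hfe]; linarith
  -- so f0 < f0-at-αstarstar, and slope positive gives result
  have hfin : αstar * p Um 0 + (1 - αstar) * p Up 0 <
      αstarstar * p Um 0 + (1 - αstarstar) * p Up 0 := by
    rw [← hf0]; rw [heq]; exact hstep
  nlinarith [sub_pos.mpr hAB0]
end
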